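/- Let T be a QBDC with λ_n ≠ 0 for all n. If φ is a normal invariant state of T with φ(e_{n,n}) ≠ 0 and φ(e_{n+1,n+1}) = 0 for some n, then a contradiction arises; hence for any normal invariant state there exists m with φ(e_{k,k}) ≠ 0 for all k ≥ m. -/

import Mathlib

open scoped ComplexOrder
open Filter

noncomputable section

abbrev H2 : Type := lp (fun _ : ℕ => ℂ) 2

abbrev BH : Type := H2 →L[ℂ] H2

def ee (n : ℕ) : H2 := lp.single 2 n 1

/-- matrix unit e_{n,m} : e_k ↦ δ_{m,k} e_n -/
def mU (n m : ℕ) : BH := (innerSL ℂ (ee m)).smulRight (ee n)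

/-- projection onto span{e_k : n ≤ k ≤ m} -/
def pI (n m : ℕ) : BH := ∑ k ∈ Finset.Icc n m, mU k k

def IsUCP (T : BH → BH) : Prop :=
  T 1 = 1 ∧ (∀ x y : BH, T (x + y) = T x + T y) ∧
  (∀ (c : ℂ) (x : BH), T (c • x) = c • T x) ∧
  ∀ (n : ℕ) (a : Fin n → BH) (ξ : Fin n → H2),
    0 ≤ ∑ i, ∑ j, (inner ℂ (ξ i) (T (star (a i) * a j) (ξ j)) : ℂ)

def IsQBDC (T : BH → BH) : Prop :=
  IsUCP T ∧ ∀ n m : ℕ, n ≤ m →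
    (T (pI n m) - pI (n+1) (m-1)).IsPositive ∧
    (pI (n-1) (m+1) - T (pI n m)).IsPositive

def IsNormalState (φ : BH → ℂ) : Prop :=
  ∃ ξ : ℕ → H2, Summable (fun k => ‖ξ k‖ ^ 2) ∧ (∑' k, ‖ξ k‖ ^ 2) = 1 ∧
    ∀ x : BH, φ x = ∑' k, (inner ℂ (ξ k) (x (ξ k)) : ℂ)

def InvState (T : BH → BH) (φ : BH → ℂ) : Prop := ∀ x, φ (T x) = φ x

/-- birth rate λ_n = Tr(e_{n,n} T(e_{n+1,n+1})) -/
def lamr (T : BH → BH) (n : ℕ) : ℝ := (inner ℂ (ee n) (T (mU (n+1) (n+1)) (ee n)) : ℂ).re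

/-- death rate μ_n = Tr(e_{n,n} T(e_{n-1,n-1})) -/
def mur (T : BH → BH) (n : ℕ) : ℝ := (inner ℂ (ee n) (T (mU (n-1) (n-1)) (ee n)) : ℂ).re

/-- η_n = Tr(e_{n+1,n} T(e_{n,n})) -/
def etar (T : BH → BH) (n : ℕ) : ℂ := (inner ℂ (ee n) (T (mU n n) (ee (n+1))) : ℂ)

/-- quadratic form ⟨Aξ,ξ⟩ of a matrix-encoded operator with domain D = span{e_n} -/
def Qf (A : ℕ → ℕ → ℂ) (ξ : ℕ →₀ ℂ) : ℂ :=
  ∑ a ∈ ξ.support, ∑ b ∈ ξ.support, (starRingEnd ℂ) (ξ a) * A a b * ξ b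

/-- application of a QBDC to an (unbounded) operator encoded by its matrix -/
def TU (T : BH → BH) (A : ℕ → ℕ → ℂ) : ℕ → ℕ → ℂ := fun a b =>
  ∑ n ∈ Finset.Icc (a-1) (a+1), ∑ m ∈ Finset.Icc (b-1) (b+1),
    A n m * (inner ℂ (ee a) (T (mU n m) (ee b)) : ℂ)


-- ===== auxiliary lemmas =====

lemma inner_ee (v : H2) (i : ℕ) : (inner ℂ (ee i) v : ℂ) = v i := by
  rw [ee, lp.inner_single_left, RCLike.inner_apply, map_one, mul_one]

lemma ee_apply (i j : ℕ) : (ee i : ∀ _ : ℕ, ℂ) j = if j = i then 1 else 0 := by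
  rw [ee, lp.single_apply]
  split_ifs with h
  · subst h; exact Pi.single_eq_same _ _
  · exact Pi.single_eq_of_ne h _

lemma inner_ee_ee (a b : ℕ) : (inner ℂ (ee a) (ee b) : ℂ) = if a = b then 1 else 0 := by
  rw [inner_ee, ee_apply]

lemma mU_apply (a b : ℕ) (v : H2) : mU a b v = (inner ℂ (ee b) v : ℂ) • ee a := rfl

lemma pI_apply (a b : ℕ) (v : H2) :
    pI a b v = ∑ k ∈ Finset.Icc a b, (inner ℂ (ee k) v : ℂ) • ee k := by
  rw [pI, ContinuousLinearMap.sum_apply]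
  exact Finset.sum_congr rfl fun k _ => mU_apply k k v

lemma inner_ee_pI (j a b : ℕ) (v : H2) :
    (inner ℂ (ee j) (pI a b v) : ℂ) = if j ∈ Finset.Icc a b then (inner ℂ (ee j) v : ℂ) else 0 := by
  rw [pI_apply, inner_sum]
  simp_rw [inner_smul_right, inner_ee_ee, mul_ite, mul_one, mul_zero]
  rw [Finset.sum_ite_eq (Finset.Icc a b) j (fun k => (inner ℂ (ee k) v : ℂ))]

lemma pI_idem (a b : ℕ) (v : H2) : pI a b (pI a b v) = pI a b v := by
  conv_lhs => rw [pI_apply a b (pI a b v)]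
  conv_rhs => rw [pI_apply a b v]
  refine Finset.sum_congr rfl fun k hk => ?_
  rw [inner_ee_pI, if_pos hk]

lemma mU_adjoint (a b : ℕ) : ContinuousLinearMap.adjoint (mU a b) = mU b a := by
  symm
  rw [ContinuousLinearMap.eq_adjoint_iff]
  intro u v
  rw [mU_apply, mU_apply, inner_smul_left, inner_smul_right, inner_conj_symm]
  ring

lemma mU_star (a b : ℕ) : star (mU a b) = mU b a := by
  rw [ContinuousLinearMap.star_eq_adjoint, mU_adjoint]

lemma pI_star (a b : ℕ) : star (pI a b) = pI a b := by
  rw [pI, star_sum]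
  exact Finset.sum_congr rfl fun k _ => mU_star k k

lemma pI_selfAdjoint (a b : ℕ) : IsSelfAdjoint (pI a b) := pI_star a b

lemma pI_mul_pI (a b : ℕ) : pI a b * pI a b = pI a b :=
  ContinuousLinearMap.ext fun v => by
    rw [ContinuousLinearMap.mul_apply]; exact pI_idem a b v

lemma pI_single (a : ℕ) : pI a a = mU a a := by
  rw [pI, Finset.Icc_self, Finset.sum_singleton]

lemma pI_succ_top (a b : ℕ) (h : a ≤ b + 1) : pI a (b+1) = pI a b + mU (b+1) (b+1) := by
  rw [pI, pI, Finset.sum_Icc_succ_top h]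

lemma pos_of_inner {S : BH} (h : ∀ v : H2, 0 ≤ (inner ℂ v (S v) : ℂ)) : S.IsPositive := by
  rw [ContinuousLinearMap.isPositive_iff_complex]
  intro x
  have hx := h x
  rw [Complex.le_def] at hx
  simp only [Complex.zero_re, Complex.zero_im] at hx
  have h2 : (inner ℂ (S x) x : ℂ) = (starRingEnd ℂ) (inner ℂ x (S x) : ℂ) :=
    (inner_conj_symm _ _).symm
  have hval : (inner ℂ (S x) x : ℂ) = (((inner ℂ x (S x) : ℂ).re : ℝ) : ℂ) := by
    rw [h2]; clear h2
    apply Complex.ext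
    · rw [Complex.conj_re, Complex.ofReal_re]
    · rw [Complex.conj_im, ← hx.2, neg_zero, Complex.ofReal_im]
  constructor
  · rw [hval]; simp
  · rw [hval]; simpa using hx.1

lemma re_inner_nonneg {S : BH} (hS : S.IsPositive) (v : H2) :
    0 ≤ (inner ℂ v (S v) : ℂ).re := by
  have := hS.inner_nonneg_right v
  simpa using (Complex.le_def.mp this).1

lemma inner_self_adjoint {S : BH} (hS : IsSelfAdjoint S) (u v : H2) :
    (inner ℂ (S u) v : ℂ) = inner ℂ u (S v) := by
  have hadj : ContinuousLinearMap.adjoint S = S := ContinuousLinearMap.isSelfAdjoint_iff'.mp hS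
  rw [← hadj, ContinuousLinearMap.adjoint_inner_left, hadj]

lemma kernel_of_isPositive {S : BH} (hS : S.IsPositive) {v : H2}
    (h : (inner ℂ v (S v) : ℂ).re = 0) : S v = 0 := by
  set u := S v with hu
  have hvSu : (inner ℂ v (S u) : ℂ) = ((‖u‖^2 : ℝ) : ℂ) := by
    rw [← inner_self_adjoint hS.isSelfAdjoint, ← hu, inner_self_eq_norm_sq_to_K]
    norm_cast
  have huv : (inner ℂ u (S v) : ℂ) = ((‖u‖^2 : ℝ) : ℂ) := by
    rw [← hu, inner_self_eq_norm_sq_to_K]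
    norm_cast
  have key : ∀ t : ℝ, 0 ≤ 2 * t * ‖u‖^2 + t^2 * (inner ℂ u (S u) : ℂ).re := by
    intro t
    have h0 : 0 ≤ (inner ℂ (v + (t:ℂ) • u) (S (v + (t:ℂ) • u)) : ℂ).re :=
      re_inner_nonneg hS _
    have hexp : (inner ℂ (v + (t:ℂ) • u) (S (v + (t:ℂ) • u)) : ℂ)
        = inner ℂ v (S v) + ((2 * t * ‖u‖^2 : ℝ) : ℂ) + ((t^2 : ℝ) : ℂ) * inner ℂ u (S u) := by
      rw [map_add, map_smul, inner_add_left, inner_add_right, inner_add_right,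
        inner_smul_left, inner_smul_right, inner_smul_left, inner_smul_right,
        hvSu, huv, Complex.conj_ofReal]
      push_cast
      ring
    rw [hexp] at h0
    simp [Complex.add_re, Complex.mul_re, ← Complex.ofReal_pow] at h0
    linarith [h]
  have hb : 0 ≤ (inner ℂ u (S u) : ℂ).re := re_inner_nonneg hS u
  have ha : ‖u‖^2 ≤ 0 := by
    by_contra hc
    push_neg at hc
    set a := ‖u‖^2 with ha_def
    set b := (inner ℂ u (S u) : ℂ).re with hb_def
    have hb1 : 0 < b + 1 := by linarith
    set s := a/(b+1) with hs_def
    have hs : 0 < s := div_pos hc hb1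
    have h1 : 2*s*a ≤ s^2 * b := by have := key (-s); nlinarith [this]
    have h3 : 2*a ≤ s*b := by
      have h2 : s * (2*a) ≤ s * (s*b) := by nlinarith [h1]
      exact le_of_mul_le_mul_left h2 hs
    have h4 : s * b ≤ a := by
      rw [hs_def, div_mul_eq_mul_div, div_le_iff₀ hb1]
      nlinarith [hc.le]
    linarith
  have hn : ‖u‖ = 0 := by nlinarith [sq_nonneg ‖u‖, norm_nonneg u]
  exact norm_eq_zero.mp hn

lemma diag_term (m : ℕ) (v : H2) :
    (inner ℂ v (mU m m v) : ℂ) = ((‖(inner ℂ (ee m) v : ℂ)‖^2 : ℝ) : ℂ) := by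
  rw [mU_apply, inner_smul_right, ← inner_conj_symm v (ee m), Complex.mul_conj]
  norm_cast
  simp [Complex.normSq_eq_norm_sq]

lemma summable_re' {f : ℕ → ℂ} (hf : Summable f) : Summable fun k => (f k).re :=
  (Complex.hasSum_re hf.hasSum).summable
lemma pI_ee (a b j : ℕ) : pI a b (ee j) = if j ∈ Finset.Icc a b then ee j else 0 := by
  rw [pI_apply]
  have h : ∀ k ∈ Finset.Icc a b,
      (inner ℂ (ee k) (ee j) : ℂ) • ee k = if k = j then ee j else 0 := by
    intro k _
    rw [inner_ee_ee]
    split_ifs with hkj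
    · subst hkj; rw [one_smul]
    · rw [zero_smul]
  rw [Finset.sum_congr rfl h, Finset.sum_ite_eq' (Finset.Icc a b) j (fun _ => ee j)]


set_option maxHeartbeats 1000000 in
/-- **Diagonal support of normal invariant states of a QBDC with nonvanishing
birth rates.**  If `φ` is a normal invariant state and `λ_n ≠ 0` for all `n`, then
`φ(e_{n,n}) ≠ 0 ∧ φ(e_{n+1,n+1}) = 0` is impossible; hence there is `m` with
`φ(e_{k,k}) ≠ 0` for all `k ≥ m`. -/
theorem qbdc_invariant_state_diagonal_support
    (T : BH → BH) (hT : IsQBDC T)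
    (hlam : ∀ n, lamr T n ≠ 0)
    (φ : BH → ℂ) (hφ : IsNormalState φ) (hinv : InvState T φ) :
    (∀ n : ℕ, ¬ (φ (mU n n) ≠ 0 ∧ φ (mU (n + 1) (n + 1)) = 0)) ∧
    ∃ m : ℕ, ∀ k, m ≤ k → φ (mU k k) ≠ 0 := by
  obtain ⟨ξ, hsum, hnorm, hrep⟩ := hφ
  obtain ⟨⟨hunit, hadd, hsmul, hcp⟩, hband⟩ := hT
  have hTpos : ∀ a : BH, (T (star a * a)).IsPositive := by
    intro a
    apply pos_of_inner
    intro v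
    have h := hcp 1 (fun _ => a) (fun _ => v)
    simpa using h
  have hTproj : ∀ a b : ℕ, (T (pI a b)).IsPositive := by
    intro a b
    have h1 : star (pI a b) * pI a b = pI a b := by
      rw [pI_star, pI_mul_pI]
    have := hTpos (pI a b)
    rwa [h1] at this
  have hTmU : ∀ a : ℕ, (T (mU a a)).IsPositive := by
    intro a
    have := hTproj a a
    rwa [pI_single] at this
  have hTone : ∀ a b : ℕ, (1 - T (pI a b)).IsPositive := by
    intro a b
    have hq : star (1 - pI a b) * (1 - pI a b) = 1 - pI a b := by
      rw [star_sub, star_one, pI_star, mul_sub, sub_mul, sub_mul, one_mul, mul_one, pI_mul_pI]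
      abel
    have hsplit : T (1 - pI a b) + T (pI a b) = 1 := by
      rw [← hadd, sub_add_cancel, hunit]
    have hTsub : T (1 - pI a b) = 1 - T (pI a b) := eq_sub_of_add_eq hsplit
    have := hTpos (1 - pI a b)
    rwa [hq, hTsub] at this
  have hsummx : ∀ x : BH, Summable (fun k => (inner ℂ (ξ k) (x (ξ k)) : ℂ)) := by
    intro x
    apply Summable.of_norm_bounded (hsum.mul_left ‖x‖)
    intro k
    calc ‖(inner ℂ (ξ k) (x (ξ k)) : ℂ)‖ ≤ ‖ξ k‖ * ‖x (ξ k)‖ := norm_inner_le_norm _ _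
      _ ≤ ‖ξ k‖ * (‖x‖ * ‖ξ k‖) :=
          mul_le_mul_of_nonneg_left (x.le_opNorm _) (norm_nonneg _)
      _ = ‖x‖ * ‖ξ k‖^2 := by ring
  have hdiag_sum : ∀ m : ℕ, Summable (fun k => ‖(inner ℂ (ee m) (ξ k) : ℂ)‖^2) := by
    intro m
    apply Summable.of_nonneg_of_le (fun k => sq_nonneg _) _ hsum
    intro k
    have h1 : ‖(inner ℂ (ee m) (ξ k) : ℂ)‖ ≤ ‖ξ k‖ := by
      rw [inner_ee]
      exact lp.norm_apply_le_norm two_ne_zero (ξ k) m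
    nlinarith [norm_nonneg (inner ℂ (ee m) (ξ k) : ℂ), norm_nonneg (ξ k)]
  have hφdiag : ∀ m : ℕ, φ (mU m m) = ((∑' k, ‖(inner ℂ (ee m) (ξ k) : ℂ)‖^2 : ℝ) : ℂ) := by
    intro m
    rw [hrep, Complex.ofReal_tsum]
    exact tsum_congr fun k => diag_term m (ξ k)
  have hcoords : ∀ m : ℕ, φ (mU m m) = 0 → ∀ k, (inner ℂ (ee m) (ξ k) : ℂ) = 0 := by
    intro m h0 k
    rw [hφdiag m] at h0
    norm_cast at h0
    have hle := Summable.le_tsum (hdiag_sum m) k (fun j _ => sq_nonneg _)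
    rw [h0] at hle
    have h2 : ‖(inner ℂ (ee m) (ξ k) : ℂ)‖ = 0 := by
      nlinarith [norm_nonneg (inner ℂ (ee m) (ξ k) : ℂ), sq_nonneg ‖(inner ℂ (ee m) (ξ k) : ℂ)‖]
    exact norm_eq_zero.mp h2
  -- main step : zero diagonal propagates downward
  have stepA : ∀ n : ℕ, φ (mU (n+1) (n+1)) = 0 → φ (mU n n) = 0 := by
    intro n h1
    have hc : ∀ k, (inner ℂ (ee (n+1)) (ξ k) : ℂ) = 0 := hcoords (n+1) h1
    have posA : (T (mU (n+1) (n+1))).IsPositive := hTmU (n+1)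
    have posB : (T (pI 0 n)).IsPositive := hTproj 0 n
    have posP'B : (pI 0 (n+1) - T (pI 0 n)).IsPositive := (hband 0 n (Nat.zero_le n)).2
    have posQA : (pI n (n+2) - T (mU (n+1) (n+1))).IsPositive := by
      have := (hband (n+1) (n+1) le_rfl).2
      rwa [pI_single] at this
    have pos1C : (1 - T (pI 0 (n+1))).IsPositive := hTone 0 (n+1)
    have hP'w : ∀ k, pI 0 (n+1) (pI 0 (n+1) (ξ k)) = pI 0 (n+1) (ξ k) :=
      fun k => pI_idem _ _ _
    -- ⟪ξ k, B ξ k⟫ = ⟪w k, B w k⟫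
    have hBv_eq : ∀ k, (inner ℂ (ξ k) (T (pI 0 n) (ξ k)) : ℂ)
        = inner ℂ (pI 0 (n+1) (ξ k)) (T (pI 0 n) (pI 0 (n+1) (ξ k))) := by
      intro k
      have hu : pI 0 (n+1) (ξ k - pI 0 (n+1) (ξ k)) = 0 := by
        rw [map_sub, hP'w k]
        exact sub_self _
      have hreu : (inner ℂ (ξ k - pI 0 (n+1) (ξ k))
          (T (pI 0 n) (ξ k - pI 0 (n+1) (ξ k))) : ℂ).re = 0 := by
        have hup : 0 ≤ (inner ℂ (ξ k - pI 0 (n+1) (ξ k))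
            ((pI 0 (n+1) - T (pI 0 n)) (ξ k - pI 0 (n+1) (ξ k))) : ℂ).re :=
          re_inner_nonneg posP'B _
        rw [ContinuousLinearMap.sub_apply, hu, zero_sub, inner_neg_right, Complex.neg_re] at hup
        have hbp : 0 ≤ (inner ℂ (ξ k - pI 0 (n+1) (ξ k))
            (T (pI 0 n) (ξ k - pI 0 (n+1) (ξ k))) : ℂ).re :=
          re_inner_nonneg posB _
        linarith
      have hBu : T (pI 0 n) (ξ k - pI 0 (n+1) (ξ k)) = 0 := kernel_of_isPositive posB hreu
      have hsplit : ξ k = pI 0 (n+1) (ξ k) + (ξ k - pI 0 (n+1) (ξ k)) := by abel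
      conv_lhs => rw [hsplit]
      rw [map_add, hBu, add_zero, inner_add_left]
      have h5 : (inner ℂ (ξ k - pI 0 (n+1) (ξ k)) (T (pI 0 n) (pI 0 (n+1) (ξ k))) : ℂ) = 0 := by
        rw [← inner_self_adjoint posB.isSelfAdjoint, hBu, inner_zero_left]
      rw [h5, add_zero]
    -- ⟪w k, w k⟫ facts
    have hww : ∀ k, (inner ℂ (pI 0 (n+1) (ξ k)) (pI 0 (n+1) (ξ k)) : ℂ)
        = ((‖pI 0 (n+1) (ξ k)‖^2 : ℝ) : ℂ) := by
      intro k
      rw [inner_self_eq_norm_sq_to_K]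
      norm_cast
    have hvP'v : ∀ k, (inner ℂ (ξ k) (pI 0 (n+1) (ξ k)) : ℂ)
        = ((‖pI 0 (n+1) (ξ k)‖^2 : ℝ) : ℂ) := by
      intro k
      have h3 := inner_self_adjoint (pI_selfAdjoint 0 (n+1)) (ξ k) (pI 0 (n+1) (ξ k))
      rw [hP'w k] at h3
      rw [← h3, hww k]
    have hvPv : ∀ k, (inner ℂ (ξ k) (pI 0 n (ξ k)) : ℂ)
        = ((‖pI 0 (n+1) (ξ k)‖^2 : ℝ) : ℂ) := by
      intro k
      have hsp : pI 0 (n+1) = pI 0 n + mU (n+1) (n+1) := pI_succ_top 0 n (Nat.zero_le _)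
      have h2 : (inner ℂ (ξ k) (pI 0 (n+1) (ξ k)) : ℂ)
          = inner ℂ (ξ k) (pI 0 n (ξ k)) + inner ℂ (ξ k) (mU (n+1) (n+1) (ξ k)) := by
        rw [hsp, ContinuousLinearMap.add_apply, inner_add_right]
      have h3 : (inner ℂ (ξ k) (mU (n+1) (n+1) (ξ k)) : ℂ) = 0 := by
        rw [diag_term, hc k]
        norm_num
      rw [h3, add_zero] at h2
      rw [← h2, hvP'v k]
    -- the tsum argument : re⟪w k, B w k⟫ = ‖w k‖²
    have hBw : ∀ k, (inner ℂ (pI 0 (n+1) (ξ k)) (T (pI 0 n) (pI 0 (n+1) (ξ k))) : ℂ).re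
        = ‖pI 0 (n+1) (ξ k)‖^2 := by
      have hf1s : Summable (fun k => (inner ℂ (ξ k) (pI 0 n (ξ k)) : ℂ).re) :=
        summable_re' (hsummx (pI 0 n))
      have hf2s : Summable (fun k => (inner ℂ (ξ k) (T (pI 0 n) (ξ k)) : ℂ).re) :=
        summable_re' (hsummx (T (pI 0 n)))
      have h12 : (∑' k, (inner ℂ (ξ k) (T (pI 0 n) (ξ k)) : ℂ).re)
          = ∑' k, (inner ℂ (ξ k) (pI 0 n (ξ k)) : ℂ).re := by
        rw [← Complex.re_tsum (hsummx (T (pI 0 n))), ← Complex.re_tsum (hsummx (pI 0 n)),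
          ← hrep, ← hrep, hinv (pI 0 n)]
      set g : ℕ → ℝ := fun k =>
        (inner ℂ (ξ k) (pI 0 n (ξ k)) : ℂ).re - (inner ℂ (ξ k) (T (pI 0 n) (ξ k)) : ℂ).re with hg
      have hgs : Summable g := hf1s.sub hf2s
      have hgnn : ∀ k, 0 ≤ g k := by
        intro k
        have e1 : (inner ℂ (ξ k) (T (pI 0 n) (ξ k)) : ℂ).re
            = (inner ℂ (pI 0 (n+1) (ξ k)) (T (pI 0 n) (pI 0 (n+1) (ξ k))) : ℂ).re := by
          rw [hBv_eq k]
        have e2 : 0 ≤ (inner ℂ (pI 0 (n+1) (ξ k))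
            ((pI 0 (n+1) - T (pI 0 n)) (pI 0 (n+1) (ξ k))) : ℂ).re :=
          re_inner_nonneg posP'B _
        rw [ContinuousLinearMap.sub_apply, inner_sub_right, Complex.sub_re, hP'w k,
          hww k] at e2
        rw [Complex.ofReal_re] at e2
        have e3 : (inner ℂ (ξ k) (pI 0 n (ξ k)) : ℂ).re = ‖pI 0 (n+1) (ξ k)‖^2 := by
          rw [hvPv k]; exact Complex.ofReal_re _
        rw [hg]
        simp only []
        rw [e1, e3]
        linarith
      have hgt : (∑' k, g k) = 0 := by
        rw [hg, Summable.tsum_sub hf1s hf2s, h12, sub_self]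
      intro k
      have hgk : g k = 0 := by
        have hle := Summable.le_tsum hgs k (fun j _ => hgnn j)
        rw [hgt] at hle
        linarith [hgnn k]
      have e1 : (inner ℂ (ξ k) (T (pI 0 n) (ξ k)) : ℂ).re
          = (inner ℂ (pI 0 (n+1) (ξ k)) (T (pI 0 n) (pI 0 (n+1) (ξ k))) : ℂ).re := by
        rw [hBv_eq k]
      have e3 : (inner ℂ (ξ k) (pI 0 n (ξ k)) : ℂ).re = ‖pI 0 (n+1) (ξ k)‖^2 := by
        rw [hvPv k]; exact Complex.ofReal_re _
      rw [hg] at hgk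
      simp only [] at hgk
      rw [e1, e3] at hgk
      linarith
    -- lamr is positive
    have hlam_nn : 0 ≤ lamr T n := re_inner_nonneg posA (ee n)
    have hlam_pos : 0 < lamr T n := lt_of_le_of_ne hlam_nn (Ne.symm (hlam n))
    -- per k : the coordinate vanishes
    have hxzero : ∀ k, (inner ℂ (ee n) (ξ k) : ℂ) = 0 := by
      intro k
      have hQw : pI n (n+2) (pI 0 (n+1) (ξ k)) = (inner ℂ (ee n) (ξ k) : ℂ) • ee n := by
        rw [pI_apply]
        have hIcc2 : (n:ℕ) ≤ (n+1) + 1 := by omega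
        have hIcc1 : (n:ℕ) ≤ n + 1 := by omega
        rw [show n + 2 = (n+1)+1 from rfl, Finset.sum_Icc_succ_top hIcc2,
          Finset.sum_Icc_succ_top hIcc1, Finset.Icc_self, Finset.sum_singleton]
        have t1 : (inner ℂ (ee n) (pI 0 (n+1) (ξ k)) : ℂ) = inner ℂ (ee n) (ξ k) := by
          rw [inner_ee_pI, if_pos (Finset.mem_Icc.mpr ⟨Nat.zero_le _, by omega⟩)]
        have t2 : (inner ℂ (ee (n+1)) (pI 0 (n+1) (ξ k)) : ℂ) = 0 := by
          rw [inner_ee_pI, if_pos (Finset.mem_Icc.mpr ⟨Nat.zero_le _, by omega⟩)]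
          exact hc k
        have t3 : (inner ℂ (ee ((n+1)+1)) (pI 0 (n+1) (ξ k)) : ℂ) = 0 := by
          rw [inner_ee_pI,
            if_neg (fun hmem => absurd (Finset.mem_Icc.mp hmem).2 (by omega))]
        rw [t1, t2, t3, zero_smul, zero_smul, add_zero, add_zero]
      have hQu : pI n (n+2) (pI 0 (n+1) (ξ k) - (inner ℂ (ee n) (ξ k) : ℂ) • ee n) = 0 := by
        rw [map_sub, hQw, map_smul, pI_ee,
          if_pos (Finset.mem_Icc.mpr ⟨le_refl n, by omega⟩), sub_self]
      have hreu : (inner ℂ (pI 0 (n+1) (ξ k) - (inner ℂ (ee n) (ξ k) : ℂ) • ee n)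
          (T (mU (n+1) (n+1)) (pI 0 (n+1) (ξ k) - (inner ℂ (ee n) (ξ k) : ℂ) • ee n)) : ℂ).re
          = 0 := by
        have hup : 0 ≤ (inner ℂ (pI 0 (n+1) (ξ k) - (inner ℂ (ee n) (ξ k) : ℂ) • ee n)
            ((pI n (n+2) - T (mU (n+1) (n+1)))
              (pI 0 (n+1) (ξ k) - (inner ℂ (ee n) (ξ k) : ℂ) • ee n)) : ℂ).re :=
          re_inner_nonneg posQA _
        rw [ContinuousLinearMap.sub_apply, hQu, zero_sub, inner_neg_right, Complex.neg_re] at hup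
        have hbp : 0 ≤ (inner ℂ (pI 0 (n+1) (ξ k) - (inner ℂ (ee n) (ξ k) : ℂ) • ee n)
            (T (mU (n+1) (n+1)) (pI 0 (n+1) (ξ k) - (inner ℂ (ee n) (ξ k) : ℂ) • ee n)) : ℂ).re :=
          re_inner_nonneg posA _
        linarith
      have hAu : T (mU (n+1) (n+1)) (pI 0 (n+1) (ξ k) - (inner ℂ (ee n) (ξ k) : ℂ) • ee n) = 0 :=
        kernel_of_isPositive posA hreu
      have hAw : (inner ℂ (pI 0 (n+1) (ξ k)) (T (mU (n+1) (n+1)) (pI 0 (n+1) (ξ k))) : ℂ).re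
          = ‖(inner ℂ (ee n) (ξ k) : ℂ)‖^2 * lamr T n := by
        have hsplit : pI 0 (n+1) (ξ k) = (inner ℂ (ee n) (ξ k) : ℂ) • ee n
            + (pI 0 (n+1) (ξ k) - (inner ℂ (ee n) (ξ k) : ℂ) • ee n) := by abel
        conv_lhs => rw [hsplit]
        rw [map_add, hAu, add_zero, inner_add_left]
        have h5 : (inner ℂ (pI 0 (n+1) (ξ k) - (inner ℂ (ee n) (ξ k) : ℂ) • ee n)
            (T (mU (n+1) (n+1)) ((inner ℂ (ee n) (ξ k) : ℂ) • ee n)) : ℂ) = 0 := by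
          rw [← inner_self_adjoint posA.isSelfAdjoint, hAu, inner_zero_left]
        rw [h5, add_zero, map_smul, inner_smul_left, inner_smul_right, ← mul_assoc,
          mul_comm ((starRingEnd ℂ) (inner ℂ (ee n) (ξ k) : ℂ)) (inner ℂ (ee n) (ξ k) : ℂ),
          Complex.mul_conj]
        rw [Complex.mul_re]
        have him : ((Complex.normSq (inner ℂ (ee n) (ξ k) : ℂ) : ℝ) : ℂ).im = 0 := by norm_cast
        rw [him, zero_mul, sub_zero]
        have h2 : ((Complex.normSq (inner ℂ (ee n) (ξ k) : ℂ) : ℝ) : ℂ).re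
            = ‖(inner ℂ (ee n) (ξ k) : ℂ)‖^2 := by
          rw [Complex.ofReal_re, Complex.normSq_eq_norm_sq, Complex.sq_norm]
        rw [h2]
        rfl
      have hCw : (inner ℂ (pI 0 (n+1) (ξ k)) (T (pI 0 (n+1)) (pI 0 (n+1) (ξ k))) : ℂ).re
          = ‖pI 0 (n+1) (ξ k)‖^2 + ‖(inner ℂ (ee n) (ξ k) : ℂ)‖^2 * lamr T n := by
        have hsum2 : T (pI 0 (n+1)) = T (pI 0 n) + T (mU (n+1) (n+1)) := by
          rw [← hadd, ← pI_succ_top 0 n (Nat.zero_le _)]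
        rw [hsum2, ContinuousLinearMap.add_apply, inner_add_right, Complex.add_re,
          hBw k, hAw]
      have hCle : (inner ℂ (pI 0 (n+1) (ξ k)) (T (pI 0 (n+1)) (pI 0 (n+1) (ξ k))) : ℂ).re
          ≤ ‖pI 0 (n+1) (ξ k)‖^2 := by
        have h6 := re_inner_nonneg pos1C (pI 0 (n+1) (ξ k))
        rw [ContinuousLinearMap.sub_apply, inner_sub_right, Complex.sub_re,
          ContinuousLinearMap.one_apply, hww k, Complex.ofReal_re] at h6
        linarith
      have hx2 : ‖(inner ℂ (ee n) (ξ k) : ℂ)‖^2 * lamr T n ≤ 0 := by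
        rw [hCw] at hCle
        linarith
      have hx3 : ‖(inner ℂ (ee n) (ξ k) : ℂ)‖^2 ≤ 0 := by
        by_contra hcon
        push_neg at hcon
        nlinarith
      have hn0 : ‖(inner ℂ (ee n) (ξ k) : ℂ)‖ = 0 := by
        nlinarith [norm_nonneg (inner ℂ (ee n) (ξ k) : ℂ), sq_nonneg ‖(inner ℂ (ee n) (ξ k) : ℂ)‖]
      exact norm_eq_zero.mp hn0
    rw [hφdiag n]
    have hz : ∀ k, ‖(inner ℂ (ee n) (ξ k) : ℂ)‖^2 = 0 := by
      intro k
      rw [hxzero k]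
      simp
    rw [tsum_congr hz, tsum_zero]
    norm_num
  -- existence of a nonzero diagonal entry
  have hex : ∃ m, φ (mU m m) ≠ 0 := by
    by_contra hall
    push_neg at hall
    have hzero : ∀ k, ξ k = 0 := by
      intro k
      apply lp.ext
      funext m
      have h7 := hcoords m (hall m) k
      rw [inner_ee] at h7
      exact h7
    have h0 : (∑' k, ‖ξ k‖^2) = (0:ℝ) := by
      have hz : ∀ k, ‖ξ k‖^2 = (0:ℝ) := by
        intro k
        rw [hzero k]
        simp
      rw [tsum_congr hz, tsum_zero]
    rw [hnorm] at h0
    norm_num at h0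
  -- propagation of zeros downward
  have hprop : ∀ d k : ℕ, φ (mU (k+d) (k+d)) = 0 → φ (mU k k) = 0 := by
    intro d
    induction d with
    | zero => intro k h; simpa using h
    | succ d ih =>
      intro k h
      have h2 : φ (mU (k+d) (k+d)) = 0 := stepA (k+d) h
      exact ih k h2
  constructor
  · rintro n ⟨hne, h0⟩
    exact hne (stepA n h0)
  · obtain ⟨m, hm⟩ := hex
    refine ⟨m, fun k hk h0 => hm ?_⟩
    have h8 := hprop (k - m) m
    rw [Nat.add_sub_cancel' hk] at h8
    exact h8 h0


end
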